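/- Consider an A-coordinating network game at equilibrium at time 0 with incentives applied, and two activation sequences S¹ = {i⁰, i¹, ...} and S² = {j⁰, j¹, ...}. Define k₀ as the first time j⁰ is active in S¹ and k_s as the first time after k_{s−1} that j^s is active in S¹ (these exist since every agent activates infinitely often). Then for all s ≥ 0: if the strategy of agent j^s at time s+1 under S² is A, then the strategy of agent j^s at time k_s + 1 under S¹ is A. -/

import Mathlib

/-- Strategies: `true` = A, `false` = B. -/
def ACoord (n : ℕ) (f : Fin n → (Fin n → Bool) → Set Bool) : Prop :=
  ∀ y z : Fin n → Bool, (∀ i, y i = true → z i = true) →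
    ∀ i, (f i y = {true} → f i z = {true}) ∧
      (f i y = {true, false} → true ∈ f i z)

/-- Each decision set is `{A}`, `{B}` or `{A,B}`. -/
def ValidRule (n : ℕ) (f : Fin n → (Fin n → Bool) → Set Bool) : Prop :=
  ∀ i x, f i x = {true} ∨ f i x = {false} ∨ f i x = {true, false}

open Classical in
/-- The strategy adopted by an updating agent `i`; `tb i = some b` means fixed
tie-break `b`, `tb i = none` means keep current strategy on ties. -/
noncomputable def nextVal {n : ℕ} (f : Fin n → (Fin n → Bool) → Set Bool)
    (tb : Fin n → Option Bool) (x : Fin n → Bool) (i : Fin n) : Bool :=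
  if f i x = {true} then true
  else if f i x = {false} then false
  else (tb i).getD (x i)

/-- Asynchronous dynamics: at time `k` the active agent `σ k` updates, others stay. -/
def Traj {n : ℕ} (f : Fin n → (Fin n → Bool) → Set Bool) (tb : Fin n → Option Bool)
    (σ : ℕ → Fin n) (x : ℕ → Fin n → Bool) : Prop :=
  ∀ k j, x (k + 1) j = if j = σ k then nextVal f tb (x k) j else x k j

def Equilib {n : ℕ} (f : Fin n → (Fin n → Bool) → Set Bool) (tb : Fin n → Option Bool)
    (x : Fin n → Bool) : Prop :=
  ∀ i, nextVal f tb x i = x i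

/-- Every agent activates infinitely often. -/
def InfAct {n : ℕ} (σ : ℕ → Fin n) : Prop := ∀ i k, ∃ k', k ≤ k' ∧ σ k' = i

/-- Lemma 3 of the paper: with `kseq s` the first time after `kseq (s-1)`
that agent `σ2 s` is active in sequence `σ1`, if agent `σ2 s` plays A at time `s+1` under
`σ2`, then it plays A at time `kseq s + 1` under `σ1`. -/
theorem stmt16 {n : ℕ} (f fhat : Fin n → (Fin n → Bool) → Set Bool)
    (tb tbhat : Fin n → Option Bool)
    (hval : ValidRule n f) (hvalhat : ValidRule n fhat)
    (hA : ACoord n f) (hAhat : ACoord n fhat)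
    (hinc : ∀ i y, (true ∈ f i y → true ∈ fhat i y) ∧ (f i y = {true} → fhat i y = {true}))
    (σ1 σ2 : ℕ → Fin n) (hσ1 : InfAct σ1) (hσ2 : InfAct σ2)
    (x1 x2 : ℕ → Fin n → Bool) (h0 : x1 0 = x2 0)
    (heq : Equilib f tb (x1 0))
    (ht1 : Traj fhat tbhat σ1 x1) (ht2 : Traj fhat tbhat σ2 x2)
    (hmono : ∀ k i, x1 k i = true → x1 (k + 1) i = true)
    (hmono2 : ∀ k i, x2 k i = true → x2 (k + 1) i = true)
    (kseq : ℕ → ℕ)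
    (hk0 : σ1 (kseq 0) = σ2 0 ∧ ∀ t, t < kseq 0 → σ1 t ≠ σ2 0)
    (hks : ∀ s, σ1 (kseq (s + 1)) = σ2 (s + 1) ∧ kseq s < kseq (s + 1) ∧
      ∀ t, kseq s < t → t < kseq (s + 1) → σ1 t ≠ σ2 (s + 1)) :
    ∀ s, x2 (s + 1) (σ2 s) = true → x1 (kseq s + 1) (σ2 s) = true := by
  have hσall : ∀ s, σ1 (kseq s) = σ2 s := by
    intro s; cases s with
    | zero => exact hk0.1
    | succ t => exact (hks t).1
  have mono1 : ∀ i k k', k ≤ k' → x1 k i = true → x1 k' i = true := by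
    intro i k k' hle h
    induction k', hle using Nat.le_induction with
    | base => exact h
    | succ m _ ih => exact hmono m i ih
  have ne1 : ({true, false} : Set Bool) ≠ {true} := by
    intro h
    have : (false : Bool) ∈ ({true} : Set Bool) := h ▸ (by simp : (false:Bool) ∈ ({true,false}:Set Bool))
    simp at this
  have ne2 : ({true, false} : Set Bool) ≠ {false} := by
    intro h
    have : (true : Bool) ∈ ({false} : Set Bool) := h ▸ (by simp : (true:Bool) ∈ ({true,false}:Set Bool))
    simp at this
  have ne3 : ({false} : Set Bool) ≠ {true} := by
    intro h
    have : (false : Bool) ∈ ({true} : Set Bool) := h ▸ rfl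
    simp at this
  have key : ∀ s, (∀ i, x2 s i = true → x1 (kseq s) i = true) →
      x2 (s+1) (σ2 s) = true → x1 (kseq s + 1) (σ2 s) = true := by
    intro s hinv h2
    set j := σ2 s with hj
    have h2' : nextVal fhat tbhat (x2 s) j = true := by
      have := ht2 s j
      rw [this] at h2; simpa [hj] using h2
    have hAc := hAhat (x2 s) (x1 (kseq s)) hinv j
    have h1 : x1 (kseq s + 1) j = nextVal fhat tbhat (x1 (kseq s)) j := by
      rw [ht1 (kseq s) j]; simp [hσall s, hj]
    rw [h1]
    rcases hvalhat j (x2 s) with hc | hc | hc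
    · have hd : fhat j (x1 (kseq s)) = {true} := hAc.1 hc
      simp [nextVal, hd]
    · rw [nextVal, hc] at h2'
      simp [ne3] at h2'
    · have htr : true ∈ fhat j (x1 (kseq s)) := hAc.2 hc
      have h2'' : (tbhat j).getD (x2 s j) = true := by
        rw [nextVal, hc] at h2'
        simpa [ne1, ne2] using h2'
      rcases hvalhat j (x1 (kseq s)) with hd | hd | hd
      · simp [nextVal, hd]
      · rw [hd] at htr; simp at htr
      · rw [nextVal, hd]
        simp only [ne1, ne2, if_false]
        cases htb : tbhat j with
        | some b => rw [htb] at h2''; simpa using h2''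
        | none =>
          rw [htb] at h2''
          simp only [Option.getD_none] at h2'' ⊢
          exact hinv j h2''
  have inv : ∀ s, ∀ i, x2 s i = true → x1 (kseq s) i = true := by
    intro s
    induction s with
    | zero =>
      intro i h
      exact mono1 i 0 (kseq 0) (Nat.zero_le _) (by rw [h0]; exact h)
    | succ s ih =>
      intro i h
      have hlt := (hks s).2.1
      by_cases hij : i = σ2 s
      · subst hij
        exact mono1 _ (kseq s + 1) _ hlt (key s ih h)
      · have hx : x2 (s+1) i = x2 s i := by rw [ht2 s i]; simp [hij]
        rw [hx] at h
        exact mono1 i (kseq s) (kseq (s+1)) (le_of_lt hlt) (ih i h)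
  intro s h
  exact key s (inv s) h
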